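/- For every nonempty finite subset e ⊆ V with |e| ≤ N and every vector b : V → ℝ, the sum of the products of b over the entries of all ordered blowups of e is extracted from an exponential generating function: ∑_{i ∈ β(e)} ∏_{k=1}^{N} b(i_k) = N! · c_N, where c_N is the coefficient of X^N in the formal power series ∏_{u ∈ e} (exp(b(u)·X) − 1) over ℝ. -/

import Mathlib

/-- The set of ordered blowups of a finite subset `e` of the vertex set `V`:
all `N`-tuples of vertices whose set of entries is exactly `e`. -/
def blowups (V : Type*) [Fintype V] [DecidableEq V] (N : ℕ) (e : Finset V) :
    Finset (Fin N → V) :=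
  Finset.univ.filter (fun i => ∀ v : V, v ∈ e ↔ ∃ k : Fin N, i k = v)

open Finset PowerSeries

lemma mem_blowups_iff {V : Type*} [Fintype V] [DecidableEq V] {N : ℕ} {t : Finset V}
    {i : Fin N → V} : i ∈ blowups V N t ↔ Finset.image i Finset.univ = t := by
  simp only [blowups, Finset.mem_filter, Finset.mem_univ, true_and]
  constructor
  · intro h
    ext v
    simp only [Finset.mem_image, Finset.mem_univ, true_and]
    exact (h v).symm
  · rintro rfl v
    simp

/-- Lemma A : `(∑_{u∈s} b u)^N = ∑_{t ⊆ s} G(t)`. -/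
lemma sum_pow_eq_sum_blowups {V : Type*} [Fintype V] [DecidableEq V] (N : ℕ)
    (b : V → ℝ) (s : Finset V) :
    (∑ u ∈ s, b u) ^ N = ∑ t ∈ s.powerset, ∑ i ∈ blowups V N t, ∏ k, b (i k) := by
  have h1 : (∑ u ∈ s, b u) ^ N = ∏ _k : Fin N, ∑ u ∈ s, b u := by
    rw [Finset.prod_const, Finset.card_univ, Fintype.card_fin]
  rw [h1, Finset.prod_univ_sum]
  rw [← Finset.sum_fiberwise_of_maps_to
    (g := fun i : Fin N → V => Finset.image i Finset.univ) (t := s.powerset)]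
  · refine Finset.sum_congr rfl fun t ht => ?_
    refine Finset.sum_congr ?_ fun _ _ => rfl
    ext i
    simp only [Finset.mem_filter, Fintype.mem_piFinset, mem_blowups_iff]
    constructor
    · rintro ⟨_, h⟩; exact h
    · rintro rfl
      refine ⟨fun k => ?_, rfl⟩
      have := Finset.mem_powerset.1 ht
      exact this (Finset.mem_image.2 ⟨k, Finset.mem_univ _, rfl⟩)
  · intro i hi
    rw [Fintype.mem_piFinset] at hi
    rw [Finset.mem_powerset]
    intro v hv
    rw [Finset.mem_image] at hv
    obtain ⟨k, _, rfl⟩ := hv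
    exact hi k

/-- The alternating sum over an interval `[r, e]` in the powerset lattice. -/
lemma sum_interval_neg_one_pow {V : Type*} [DecidableEq V] (e r : Finset V) (hr : r ⊆ e) :
    ∑ t ∈ e.powerset.filter (fun t => r ⊆ t), (-1 : ℝ) ^ (e \ t).card
      = if r = e then 1 else 0 := by
  have himg : e.powerset.filter (fun t => r ⊆ t) = (e \ r).powerset.image (fun u => u ∪ r) := by
    ext t
    simp only [Finset.mem_filter, Finset.mem_powerset, Finset.mem_image]
    constructor
    · rintro ⟨hte, hrt⟩
      refine ⟨t \ r, ?_, Finset.sdiff_union_of_subset hrt⟩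
      intro x hx
      rw [Finset.mem_sdiff] at hx ⊢
      exact ⟨hte hx.1, hx.2⟩
    · rintro ⟨u, hu, rfl⟩
      refine ⟨Finset.union_subset (fun x hx => (Finset.mem_sdiff.1 (hu hx)).1) hr,
        Finset.subset_union_right⟩
  rw [himg, Finset.sum_image]
  · have key : ∀ u ∈ (e \ r).powerset, (-1 : ℝ) ^ (e \ (u ∪ r)).card
        = (-1 : ℝ) ^ (e \ r).card * (-1 : ℝ) ^ u.card := by
      intro u hu
      rw [Finset.mem_powerset] at hu
      have h2 : e \ (u ∪ r) = (e \ r) \ u := by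
        ext x
        simp only [Finset.mem_sdiff, Finset.mem_union]
        tauto
      rw [h2, Finset.card_sdiff_of_subset hu]
      have hle : u.card ≤ (e \ r).card := Finset.card_le_card hu
      have h3 : (e \ r).card + u.card = ((e \ r).card - u.card) + 2 * u.card := by omega
      rw [← pow_add, h3, pow_add, pow_mul, neg_one_sq, one_pow, mul_one]
    rw [Finset.sum_congr rfl key, ← Finset.mul_sum]
    have : ∑ u ∈ (e \ r).powerset, (-1 : ℝ) ^ u.card
        = if e \ r = ∅ then 1 else 0 := by
      have := Finset.sum_powerset_neg_one_pow_card (x := e \ r)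
      have hcast : ((∑ m ∈ (e \ r).powerset, (-1 : ℤ) ^ m.card : ℤ) : ℝ)
          = ∑ u ∈ (e \ r).powerset, (-1 : ℝ) ^ u.card := by push_cast; ring_nf
      rw [← hcast, this]
      split <;> simp
    rw [this]
    by_cases h : e \ r = ∅
    · have : r = e := Finset.Subset.antisymm hr (by
        intro x hx
        by_contra hxr
        exact (Finset.eq_empty_iff_forall_notMem.1 h x) (Finset.mem_sdiff.2 ⟨hx, hxr⟩))
      simp [h, this]
    · have : r ≠ e := by rintro rfl; simp at h
      simp [h, this]
  · intro u₁ h₁ u₂ h₂ heq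
    rw [Finset.mem_coe, Finset.mem_powerset] at h₁ h₂
    have d₁ : Disjoint u₁ r := Finset.disjoint_left.2 fun x hx hx2 =>
      (Finset.mem_sdiff.1 (h₁ hx)).2 hx2
    have d₂ : Disjoint u₂ r := Finset.disjoint_left.2 fun x hx hx2 =>
      (Finset.mem_sdiff.1 (h₂ hx)).2 hx2
    have : (u₁ ∪ r) \ r = (u₂ ∪ r) \ r := by simp only at heq; rw [heq]
    rwa [Finset.union_sdiff_right, Finset.union_sdiff_right,
      Finset.sdiff_eq_self_iff_disjoint.2 d₁, Finset.sdiff_eq_self_iff_disjoint.2 d₂] at this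

/-- Lemma B : Möbius inversion gives `G(e)` as an alternating sum. -/
lemma blowups_sum_eq_alternating {V : Type*} [Fintype V] [DecidableEq V] (N : ℕ)
    (b : V → ℝ) (e : Finset V) :
    ∑ i ∈ blowups V N e, ∏ k, b (i k)
      = ∑ t ∈ e.powerset, (-1 : ℝ) ^ (e \ t).card * (∑ u ∈ t, b u) ^ N := by
  have expand : ∀ t ∈ e.powerset, (-1 : ℝ) ^ (e \ t).card * (∑ u ∈ t, b u) ^ N
      = ∑ r ∈ t.powerset, (-1 : ℝ) ^ (e \ t).card * ∑ i ∈ blowups V N r, ∏ k, b (i k) := by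
    intro t _
    rw [sum_pow_eq_sum_blowups, Finset.mul_sum]
  rw [Finset.sum_congr rfl expand]
  rw [Finset.sum_comm' (t' := e.powerset)
    (s' := fun r => e.powerset.filter (fun t => r ⊆ t))
    (fun t r => by
      simp only [Finset.mem_powerset, Finset.mem_filter, Finset.mem_powerset]
      constructor
      · rintro ⟨h1, h2⟩; exact ⟨⟨h1, h2⟩, h2.trans h1⟩
      · rintro ⟨⟨h1, h2⟩, _⟩; exact ⟨h1, h2⟩)]
  have inner : ∀ r ∈ e.powerset,
      (∑ t ∈ e.powerset.filter (fun t => r ⊆ t),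
        (-1 : ℝ) ^ (e \ t).card * ∑ i ∈ blowups V N r, ∏ k, b (i k))
      = (if r = e then 1 else 0) * ∑ i ∈ blowups V N r, ∏ k, b (i k) := by
    intro r hr
    rw [← Finset.sum_mul, sum_interval_neg_one_pow e r (Finset.mem_powerset.1 hr)]
  rw [Finset.sum_congr rfl inner,
    Finset.sum_eq_single_of_mem e (Finset.mem_powerset_self e)
      (fun t _ hne => by simp [hne])]
  simp

lemma prod_rescale_exp {V : Type*} [DecidableEq V] (b : V → ℝ) (t : Finset V) :
    ∏ u ∈ t, PowerSeries.rescale (b u) (PowerSeries.exp ℝ)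
      = PowerSeries.rescale (∑ u ∈ t, b u) (PowerSeries.exp ℝ) := by
  induction t using Finset.induction_on with
  | empty =>
    simp only [Finset.prod_empty, Finset.sum_empty]
    rw [PowerSeries.rescale_zero]
    simp [PowerSeries.constantCoeff_exp]
  | insert _ _ h ih =>
    rw [Finset.prod_insert h, Finset.sum_insert h, ih,
      PowerSeries.exp_mul_exp_eq_exp_add]

/-- For every nonempty `e ⊆ V` with `|e| ≤ N` and every vector `b : V → ℝ`,
`∑_{i ∈ β(e)} ∏_{k=1}^N b(i_k) = N! ⬝ c_N`, where `c_N` is the coefficient of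
`X^N` in the formal power series `∏_{u ∈ e} (exp(b(u)·X) − 1)` over `ℝ`. -/
theorem blowups_sum_eq_coeff (V : Type*) [Fintype V] [DecidableEq V]
    (N : ℕ) (hN : 2 ≤ N) (e : Finset V) (he : e.Nonempty) (hcard : e.card ≤ N)
    (b : V → ℝ) :
    ∑ i ∈ blowups V N e, ∏ k, b (i k) =
      (N.factorial : ℝ) *
        PowerSeries.coeff (R := ℝ) N
          (∏ u ∈ e, (PowerSeries.rescale (b u) (PowerSeries.exp ℝ) - 1)) := by
  have hexpand : ∏ u ∈ e, (PowerSeries.rescale (b u) (PowerSeries.exp ℝ) - 1)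
      = ∑ t ∈ e.powerset,
          (PowerSeries.rescale (∑ u ∈ t, b u) (PowerSeries.exp ℝ)) * (-1) ^ (e \ t).card := by
    have : ∀ u ∈ e, PowerSeries.rescale (b u) (PowerSeries.exp ℝ) - 1
        = PowerSeries.rescale (b u) (PowerSeries.exp ℝ) + (-1) := by
      intro u _; ring
    rw [Finset.prod_congr rfl this, Finset.prod_add]
    refine Finset.sum_congr rfl fun t _ => ?_
    rw [prod_rescale_exp, Finset.prod_const]
  rw [hexpand, map_sum, Finset.mul_sum, blowups_sum_eq_alternating]
  refine Finset.sum_congr rfl fun t _ => ?_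
  have hcoeff : PowerSeries.coeff (R := ℝ) N
      ((PowerSeries.rescale (∑ u ∈ t, b u) (PowerSeries.exp ℝ)) * (-1) ^ (e \ t).card)
      = (∑ u ∈ t, b u) ^ N * ((N.factorial : ℝ))⁻¹ * (-1) ^ (e \ t).card := by
    have h1 : ((-1 : PowerSeries ℝ)) ^ (e \ t).card
        = PowerSeries.C (R := ℝ) ((-1 : ℝ) ^ (e \ t).card) := by
      rw [map_pow, map_neg, map_one]
    rw [h1, PowerSeries.coeff_mul_C, PowerSeries.coeff_rescale, PowerSeries.coeff_exp]
    have : (algebraMap ℚ ℝ) (1 / (N.factorial : ℚ)) = ((N.factorial : ℝ))⁻¹ := by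
      push_cast [map_div₀]
      simp
    rw [this]
  rw [hcoeff]
  have hfac : (N.factorial : ℝ) ≠ 0 := Nat.cast_ne_zero.2 N.factorial_ne_zero
  field_simp
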